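/- Let e ≥ 2 be an integer, and let m ≥ (e+3)/2. If g := gcd(m+e, 2e) satisfies g² = (m+e)² - 2e(2m-2), then g² = (m-e)² + 4e, g² divides 4e, g² ≥ 4e, hence g² = 4e and m = e; moreover then g = 2e and e = 1, a contradiction. Therefore there is no positive integer g = gcd(m+e, 2e) with g² = (m+e)² - 2e(2m-2) when e ≥ 2. -/

import Mathlib

/-- For `e ≥ 2` and `m ≥ (e+3)/2` there is no `g = gcd(m+e, 2e)` with
`g² = (m+e)² - 2e(2m-2)`. -/
theorem stmt_9 (e m : ℤ) (he : 2 ≤ e) (hm : e + 3 ≤ 2 * m) :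
    ¬ ((Int.gcd (m + e) (2 * e) : ℤ) ^ 2 = (m + e) ^ 2 - 2 * e * (2 * m - 2)) := by
  intro h
  set g : ℤ := (Int.gcd (m + e) (2 * e) : ℤ) with hg
  have h1 : g ^ 2 = (m - e) ^ 2 + 4 * e := by rw [h]; ring
  have hd1 : g ∣ m + e := Int.gcd_dvd_left _ _
  have hd2 : g ∣ 2 * e := Int.gcd_dvd_right _ _
  have hd3 : g ∣ m - e := by
    have : m - e = (m + e) - 2 * e := by ring
    rw [this]; exact dvd_sub hd1 hd2
  have hd4 : g ^ 2 ∣ 4 * e := by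
    have : (4 : ℤ) * e = g ^ 2 - (m - e) ^ 2 := by rw [h1]; ring
    rw [this]; exact dvd_sub dvd_rfl (pow_dvd_pow_of_dvd hd3 2)
  have h4e : (0 : ℤ) < 4 * e := by linarith
  have hle : g ^ 2 ≤ 4 * e := Int.le_of_dvd h4e hd4
  have hge : 4 * e ≤ g ^ 2 := by nlinarith [sq_nonneg (m - e)]
  have heq : g ^ 2 = 4 * e := le_antisymm hle hge
  have hme : m = e := by nlinarith [sq_nonneg (m - e)]
  have hgval : g = 2 * e := by
    have h2 : m + e = 2 * e := by rw [hme]; ring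
    rw [hg, h2, Int.gcd_self, Int.natCast_natAbs]
    exact abs_of_pos (by linarith)
  nlinarith [heq, hgval]
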